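/- With q, p ∈ ℝ³, q ≠ 0, L = q × p with L ≠ 0, and e = p × L − q/|q|, the momentum satisfies |p − (L × e)/|L|²|² = 1/|L|². Hence p lies on a circle (sphere intersected with the plane perpendicular to L) of radius 1/|L| centered at (L × e)/|L|². -/

import Mathlib

noncomputable section

/-- Cross product on `EuclideanSpace ℝ (Fin 3)`. -/
def cross (a b : EuclideanSpace ℝ (Fin 3)) : EuclideanSpace ℝ (Fin 3) :=
  (WithLp.equiv 2 (Fin 3 → ℝ)).symm
    ![a 1 * b 2 - a 2 * b 1, a 2 * b 0 - a 0 * b 2, a 0 * b 1 - a 1 * b 0]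

lemma norm_sq_eq' (x : EuclideanSpace ℝ (Fin 3)) : ‖x‖^2 = x 0^2 + x 1^2 + x 2^2 := by
  rw [EuclideanSpace.norm_eq, Real.sq_sqrt (by positivity)]
  simp [Fin.sum_univ_three, sq_abs]

/-- Hamilton's theorem: the momentum lies on a circle of radius `1/|L|`
centered at `(L × e)/|L|²`. -/
theorem momentum_on_circle
    (q p : EuclideanSpace ℝ (Fin 3)) (hq : q ≠ 0)
    (L e : EuclideanSpace ℝ (Fin 3))
    (hL : L = cross q p) (hLne : L ≠ 0)
    (he : e = cross p L - ‖q‖⁻¹ • q) :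
    ‖p - (‖L‖ ^ 2)⁻¹ • cross L e‖ ^ 2 = (‖L‖ ^ 2)⁻¹ := by
  have hs : (0:ℝ) < ‖q‖ := norm_pos_iff.mpr hq
  have ht : (0:ℝ) < ‖L‖ := norm_pos_iff.mpr hLne
  have ht2 : ‖L‖^2 = L 0^2 + L 1^2 + L 2^2 := norm_sq_eq' L
  have hs2 : ‖q‖^2 = q 0^2 + q 1^2 + q 2^2 := norm_sq_eq' q
  have hLp : L 0 * p 0 + L 1 * p 1 + L 2 * p 2 = 0 := by
    rw [hL]; simp [cross]; ring
  have hLq : L 0 * q 0 + L 1 * q 1 + L 2 * q 2 = 0 := by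
    rw [hL]; simp [cross]; ring
  have hvec : p - (‖L‖ ^ 2)⁻¹ • cross L e = ((‖L‖^2)⁻¹ * ‖q‖⁻¹) • cross L q := by
    ext i
    fin_cases i <;>
    · simp only [he, cross, WithLp.equiv_symm_apply, PiLp.toLp_apply, PiLp.sub_apply, PiLp.smul_apply,
        smul_eq_mul, Matrix.cons_val_zero, Matrix.cons_val_one, Matrix.head_cons,
        Matrix.cons_val_two, Matrix.tail_cons, Fin.isValue, Fin.zero_eta, Fin.mk_one, Matrix.cons_val]
      try rw [show (⟨2, by omega⟩ : Fin 3) = (2 : Fin 3) from rfl]; simp only [Matrix.cons_val]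
      field_simp
      try linear_combination (‖q‖ * p 0) * ht2 + (‖q‖ * L 0) * hLp
      try linear_combination (‖q‖ * p 1) * ht2 + (‖q‖ * L 1) * hLp
      try linear_combination (‖q‖ * p 2) * ht2 + (‖q‖ * L 2) * hLp
  rw [hvec, norm_smul, mul_pow, norm_sq_eq' (cross L q)]
  simp only [cross, WithLp.equiv_symm_apply, PiLp.toLp_apply, Matrix.cons_val_zero, Matrix.cons_val_one,
    Matrix.head_cons, Matrix.cons_val_two, Matrix.tail_cons]
  have hcq : (L 1 * q 2 - L 2 * q 1)^2 + (L 2 * q 0 - L 0 * q 2)^2 + (L 0 * q 1 - L 1 * q 0)^2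
      = ‖L‖^2 * ‖q‖^2 := by
    rw [ht2, hs2]
    linear_combination (-(L 0 * q 0 + L 1 * q 1 + L 2 * q 2)) * hLq
  rw [hcq, Real.norm_eq_abs, abs_of_pos (by positivity)]
  field_simp
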